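/- Let q = p^h and F : F_{p^n} -> F_{p^n} be quadratic of the form sum_{i,j} c_{i,j} x^{q^i+q^j} + sum_l c_l x^{p^l}, and let delta = max over b in F_{p^n} of |F^{-1}(b)|. Then for any c in F_{p^{gcd(n,h)}} with c != 1 and any t >= 1, the t-order c-differential uniformity of F equals delta; in fact _cD^{(t)}_{a_1,...,a_t}F(x) = (1-c)^t F(x + (a_1+...+a_t)/(1-c)) + beta' for some constant beta' depending only on a_1,...,a_t and c. -/

import Mathlib

/-- The multiplicative `c`-derivative of `F` in direction `a`. -/
def cDeriv {K L : Type*} [Add K] [Ring L] (c : L) (a : K) (F : K → L) : K → L :=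
  fun x => F (x + a) - c * F x

/-- The iterated (higher order) `c`-derivative of `F` in directions `as = [a₁, …, aₜ]`,
differentiating first in direction `a₁`, then `a₂`, etc. -/
def cDerivIter {K L : Type*} [Add K] [Ring L] (c : L) (as : List K) (F : K → L) : K → L :=
  as.foldl (fun G a => cDeriv c a G) F

theorem stmt17 (p n h : ℕ) (hp : p.Prime) (hn : 0 < n) (hh : 0 < h)
    (K : Type*) [Field K] [Fintype K] (hK : Fintype.card K = p ^ n)
    (s : Finset (ℕ × ℕ)) (coef : ℕ × ℕ → K) (s' : Finset ℕ) (coef' : ℕ → K)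
    (F : K → K)
    (hF : ∀ x : K, F x = ∑ ij ∈ s, coef ij * x ^ (p ^ h) ^ ij.1 * x ^ (p ^ h) ^ ij.2
        + ∑ l ∈ s', coef' l * x ^ p ^ l)
    (c : K) (hcsub : c ^ p ^ Nat.gcd n h = c) (hc : c ≠ 1)
    (t : ℕ) (ht : 1 ≤ t) :
    (∀ as : List K, as.length = t → ∃ β' : K, ∀ x : K,
        cDerivIter c as F x = (1 - c) ^ t * F (x + as.sum / (1 - c)) + β') ∧
    sSup {N : ℕ | ∃ (as : List K) (b : K), as.length = t ∧
        Nat.card {x : K // cDerivIter c as F x = b} = N}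
      = sSup {N : ℕ | ∃ b : K, Nat.card {x : K // F x = b} = N} := by
  haveI : Fact p.Prime := ⟨hp⟩
  haveI hchar : CharP K p := by
    have h2 : (ringChar K).Prime := CharP.char_is_prime K (ringChar K)
    haveI : Fact (ringChar K).Prime := ⟨h2⟩
    have h1 : p ∣ ringChar K := by
      rw [prime_dvd_char_iff_dvd_card, hK]
      exact dvd_pow_self p hn.ne'
    have : ringChar K = p := ((Nat.prime_dvd_prime_iff_eq hp h2).mp h1).symm
    exact ringChar.eq_iff.mp this
  have hu : (1 : K) - c ≠ 0 := sub_ne_zero.mpr fun e => hc e.symm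
  obtain ⟨m, hm⟩ : Nat.gcd n h ∣ h := Nat.gcd_dvd_right n h
  have hfix : ∀ k : ℕ, c ^ (p ^ Nat.gcd n h) ^ k = c := by
    intro k; induction k with
    | zero => simp
    | succ k ih => rw [pow_succ, pow_mul, ih, hcsub]
  have hch : c ^ p ^ h = c := by
    rw [hm, pow_mul]; exact hfix m
  have hcq : ∀ i : ℕ, c ^ (p ^ h) ^ i = c := by
    intro i; induction i with
    | zero => simp
    | succ k ih => rw [pow_succ, pow_mul, ih, hch]
  have huq : ∀ i : ℕ, ((1 : K) - c) ^ (p ^ h) ^ i = 1 - c := by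
    intro i
    have e1 : (p ^ h) ^ i = p ^ (h * i) := (pow_mul p h i).symm
    rw [e1, sub_pow_char_pow, one_pow, ← e1, hcq i]
  -- key one-step identity
  have hstep : ∀ a x : K, F (x + a) - c * F x
      = (1 - c) * F (x + a / (1 - c)) + (F a - (1 - c) * F (a / (1 - c))) := by
    intro a x
    have hdq : ∀ i : ℕ, (a / (1 - c)) ^ (p ^ h) ^ i = a ^ (p ^ h) ^ i / (1 - c) := by
      intro i; rw [div_pow, huq i]
    have haddq : ∀ (y z : K) (i : ℕ),
        (y + z) ^ (p ^ h) ^ i = y ^ (p ^ h) ^ i + z ^ (p ^ h) ^ i := by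
      intro y z i
      have e1 : (p ^ h) ^ i = p ^ (h * i) := (pow_mul p h i).symm
      rw [e1, add_pow_char_pow]
    have hq : (∑ ij ∈ s, coef ij * (x + a) ^ (p ^ h) ^ ij.1 * (x + a) ^ (p ^ h) ^ ij.2)
        - c * ∑ ij ∈ s, coef ij * x ^ (p ^ h) ^ ij.1 * x ^ (p ^ h) ^ ij.2
        = (1 - c) * (∑ ij ∈ s, coef ij * (x + a / (1 - c)) ^ (p ^ h) ^ ij.1
              * (x + a / (1 - c)) ^ (p ^ h) ^ ij.2)
          + ((∑ ij ∈ s, coef ij * a ^ (p ^ h) ^ ij.1 * a ^ (p ^ h) ^ ij.2)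
            - (1 - c) * ∑ ij ∈ s, coef ij * (a / (1 - c)) ^ (p ^ h) ^ ij.1
              * (a / (1 - c)) ^ (p ^ h) ^ ij.2) := by
      rw [Finset.mul_sum, Finset.mul_sum, Finset.mul_sum, ← Finset.sum_sub_distrib,
        ← Finset.sum_sub_distrib, ← Finset.sum_add_distrib]
      refine Finset.sum_congr rfl fun ij _ => ?_
      rw [haddq x a ij.1, haddq x a ij.2, haddq x (a / (1 - c)) ij.1,
        haddq x (a / (1 - c)) ij.2, hdq ij.1, hdq ij.2]
      field_simp
      ring
    have hl : (∑ l ∈ s', coef' l * (x + a) ^ p ^ l)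
        - c * ∑ l ∈ s', coef' l * x ^ p ^ l
        = (1 - c) * (∑ l ∈ s', coef' l * (x + a / (1 - c)) ^ p ^ l)
          + ((∑ l ∈ s', coef' l * a ^ p ^ l)
            - (1 - c) * ∑ l ∈ s', coef' l * (a / (1 - c)) ^ p ^ l) := by
      rw [Finset.mul_sum, Finset.mul_sum, Finset.mul_sum, ← Finset.sum_sub_distrib,
        ← Finset.sum_sub_distrib, ← Finset.sum_add_distrib]
      refine Finset.sum_congr rfl fun l _ => ?_
      rw [add_pow_char_pow, add_pow_char_pow]
      ring
    rw [hF (x + a), hF x, hF (x + a / (1 - c)), hF a, hF (a / (1 - c))]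
    linear_combination hq + hl
  -- iterated identity
  have hiter : ∀ (as : List K) (G : K → K) (lam e beta : K),
      (∀ x, G x = lam * F (x + e) + beta) →
      ∃ β' : K, ∀ x, cDerivIter c as G x
        = lam * (1 - c) ^ as.length * F (x + e + as.sum / (1 - c)) + β' := by
    intro as
    induction as with
    | nil =>
      intro G lam e beta hG
      exact ⟨beta, fun x => by simpa [cDerivIter] using hG x⟩
    | cons a as ih =>
      intro G lam e beta hG
      have hG' : ∀ x, cDeriv c a G x = (lam * (1 - c)) * F (x + (e + a / (1 - c)))
          + (lam * (F a - (1 - c) * F (a / (1 - c))) + (1 - c) * beta) := by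
        intro x
        show G (x + a) - c * G x = _
        rw [hG (x + a), hG x]
        have h1 : x + a + e = x + e + a := by ring
        have h2 : x + (e + a / (1 - c)) = x + e + a / (1 - c) := by ring
        rw [h1, h2]
        linear_combination lam * hstep a (x + e)
      obtain ⟨β', hβ'⟩ := ih (cDeriv c a G) (lam * (1 - c)) (e + a / (1 - c)) _ hG'
      refine ⟨β', fun x => ?_⟩
      have hrw : cDerivIter c (a :: as) G x = cDerivIter c as (cDeriv c a G) x := rfl
      rw [hrw, hβ' x, List.sum_cons, List.length_cons]
      have harg : x + (e + a / (1 - c)) + as.sum / (1 - c)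
          = x + e + (a + as.sum) / (1 - c) := by
        rw [add_div]; ring
      rw [harg]; ring
  have part1 : ∀ as : List K, as.length = t → ∃ β' : K, ∀ x : K,
      cDerivIter c as F x = (1 - c) ^ t * F (x + as.sum / (1 - c)) + β' := by
    intro as hlen
    obtain ⟨β', hβ'⟩ := hiter as F 1 0 0 (fun x => by simp)
    exact ⟨β', fun x => by simpa [hlen] using hβ' x⟩
  refine ⟨part1, ?_⟩
  have hpt : ((1 : K) - c) ^ t ≠ 0 := pow_ne_zero t hu
  have hset : {N : ℕ | ∃ (as : List K) (b : K), as.length = t ∧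
        Nat.card {x : K // cDerivIter c as F x = b} = N}
      = {N : ℕ | ∃ b : K, Nat.card {x : K // F x = b} = N} := by
    ext N
    simp only [Set.mem_setOf_eq]
    constructor
    · rintro ⟨as, b, hlen, rfl⟩
      obtain ⟨β', hβ'⟩ := part1 as hlen
      refine ⟨(b - β') / (1 - c) ^ t, ?_⟩
      have key : ∀ x : K, cDerivIter c as F x = b
          ↔ F (x + as.sum / (1 - c)) = (b - β') / (1 - c) ^ t := by
        intro x
        rw [hβ' x, eq_div_iff hpt]
        constructor
        · intro hh; linear_combination hh
        · intro hh; linear_combination hh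
      have e1 : Nat.card {x : K // cDerivIter c as F x = b}
          = Nat.card {x : K // F (x + as.sum / (1 - c)) = (b - β') / (1 - c) ^ t} :=
        Nat.card_congr (Equiv.subtypeEquivRight key)
      have e2 : Nat.card {x : K // F (x + as.sum / (1 - c)) = (b - β') / (1 - c) ^ t}
          = Nat.card {y : K // F y = (b - β') / (1 - c) ^ t} :=
        Nat.card_congr (Equiv.subtypeEquiv (Equiv.addRight (as.sum / (1 - c)))
          (fun x => by simp))
      exact (e1.trans e2).symm
    · rintro ⟨b, rfl⟩
      obtain ⟨β', hβ'⟩ := part1 (List.replicate t 0) List.length_replicate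
      refine ⟨List.replicate t 0, (1 - c) ^ t * b + β', List.length_replicate, ?_⟩
      have key : ∀ x : K, cDerivIter c (List.replicate t 0) F x = (1 - c) ^ t * b + β'
          ↔ F x = b := by
        intro x
        rw [hβ' x]
        simp only [List.sum_replicate, smul_zero, zero_div, add_zero]
        constructor
        · intro hh
          exact mul_left_cancel₀ hpt (by linear_combination hh)
        · intro hh; rw [hh]
      exact Nat.card_congr (Equiv.subtypeEquivRight key)
  rw [hset]
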